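/- Let N = 2^n with n ≥ 1, and let P be a binary vector of length N. Write B_N(P) = (P̄_0, P̄_1) as the concatenation of its first and second halves (each of length N/2). Then P is a union of rows of G_N (or zero) if and only if B_{N/2}(P̄_0) and B_{N/2}(P̄_1) are each unions of rows of G_{N/2} (or zero) and P̄_1 ⊆ P̄_0 (entrywise). -/

import Mathlib

def G2 : Matrix (Fin 2) (Fin 2) (ZMod 2) := !![1,0;1,1]

def Gmat : (n : ℕ) → Matrix (Fin (2^n)) (Fin (2^n)) (ZMod 2)
  | 0 => 1
  | n+1 =>
    Matrix.reindex (finProdFinEquiv.trans (finCongr (by rw [pow_succ, Nat.mul_comm])))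
      (finProdFinEquiv.trans (finCongr (by rw [pow_succ, Nat.mul_comm])))
      (Matrix.kroneckerMap (· * ·) G2 (Gmat n))

def bitRev : ℕ → ℕ → ℕ
  | 0, _ => 0
  | n+1, i => 2^n * (i % 2) + bitRev n (i / 2)

theorem bitRev_lt (n i : ℕ) : bitRev n i < 2^n := by
  induction n generalizing i with
  | zero => simp [bitRev]
  | succ n ih =>
    have h1 : i % 2 < 2 := Nat.mod_lt _ (by norm_num)
    have h2 := ih (i / 2)
    have h3 : 2^n * (i % 2) ≤ 2^n := by
      calc 2^n * (i % 2) ≤ 2^n * 1 := Nat.mul_le_mul_left _ (by omega)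
        _ = 2^n := by omega
    have h4 : 2^(n+1) = 2^n * 2 := pow_succ 2 n
    simp only [bitRev]
    omega

def bitRevFin (n : ℕ) (i : Fin (2^n)) : Fin (2^n) := ⟨bitRev n i.val, bitRev_lt n i.val⟩

def bitRevVec (n : ℕ) (P : Fin (2^n) → Bool) : Fin (2^n) → Bool :=
  fun i => P (bitRevFin n i)

def elemPerm (j k i : ℕ) : ℕ :=
  if i < k ∨ k + 2^(j+1) ≤ i then i
  else if i < k + 2^j then i + 2^j
  else i - 2^j

def elemPermVec (n j k : ℕ) (P : Fin (2^n) → Bool) : Fin (2^n) → Bool :=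
  fun i => P ⟨elemPerm j k i.val % 2^n, Nat.mod_lt _ (Nat.two_pow_pos n)⟩

def ElemValid (n j k : ℕ) : Prop := j + 1 ≤ n ∧ 2^(j+1) ∣ k ∧ k < 2^n

def wt {m : ℕ} (P : Fin m → Bool) : ℕ := (Finset.univ.filter fun i => P i = true).card

def IsRowUnion (n : ℕ) (P : Fin (2^n) → Bool) : Prop :=
  ∃ L : Finset (Fin (2^n)), L.Nonempty ∧ ∀ j, P j = true ↔ ∃ i ∈ L, Gmat n i j = 1

def blockLt (n j k : ℕ) (P : Fin (2^n) → Bool) : Prop :=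
  ∃ t < 2^j,
    (∀ s < t, P ⟨(k+s) % 2^n, Nat.mod_lt _ (Nat.two_pow_pos n)⟩
              = P ⟨(k+2^j+s) % 2^n, Nat.mod_lt _ (Nat.two_pow_pos n)⟩) ∧
    P ⟨(k+t) % 2^n, Nat.mod_lt _ (Nat.two_pow_pos n)⟩ = false ∧
    P ⟨(k+2^j+t) % 2^n, Nat.mod_lt _ (Nat.two_pow_pos n)⟩ = true

instance (n j k : ℕ) (P : Fin (2^n) → Bool) : Decidable (blockLt n j k P) := by
  unfold blockLt; infer_instance

def algPhi (n : ℕ) (P : Fin (2^n) → Bool) : Fin (2^n) → Bool :=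
  (List.range n).foldl (fun Q j =>
    (List.range (2^(n-j-1))).foldl (fun R m =>
      if blockLt n j (m * 2^(j+1)) R then elemPermVec n j (m * 2^(j+1)) R else R) Q) P

def Pplus (n : ℕ) (P : Fin (2^(n+1)) → Bool) : Fin (2^n) → Bool :=
  fun m => P ⟨2*m.val, by have := m.isLt; have h : 2^(n+1) = 2^n*2 := pow_succ 2 n; omega⟩
        || P ⟨2*m.val+1, by have := m.isLt; have h : 2^(n+1) = 2^n*2 := pow_succ 2 n; omega⟩

def Pminus (n : ℕ) (P : Fin (2^(n+1)) → Bool) : Fin (2^n) → Bool :=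
  fun m => P ⟨2*m.val, by have := m.isLt; have h : 2^(n+1) = 2^n*2 := pow_succ 2 n; omega⟩
        && P ⟨2*m.val+1, by have := m.isLt; have h : 2^(n+1) = 2^n*2 := pow_succ 2 n; omega⟩

def eraseMap : (n : ℕ) → (Fin (2^n) → Bool) → Fin (2^n) → Bool
  | 0, P => P
  | n+1, P => fun i =>
      if h : i.val < 2^n then eraseMap n (Pplus n P) ⟨i.val, h⟩
      else eraseMap n (Pminus n P)
        ⟨i.val - 2^n, by have := i.isLt; have h2 : 2^(n+1) = 2^n*2 := pow_succ 2 n; omega⟩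

def lowHalf (n : ℕ) (P : Fin (2^(n+1)) → Bool) : Fin (2^n) → Bool :=
  fun i => P ⟨i.val, by have := i.isLt; have h : 2^(n+1) = 2^n*2 := pow_succ 2 n; omega⟩

def highHalf (n : ℕ) (P : Fin (2^(n+1)) → Bool) : Fin (2^n) → Bool :=
  fun i => P ⟨2^n + i.val, by have := i.isLt; have h : 2^(n+1) = 2^n*2 := pow_succ 2 n; omega⟩

def lexLT {m : ℕ} (A B : Fin m → Bool) : Prop :=
  ∃ k, (∀ i, i < k → A i = B i) ∧ A k = false ∧ B k = true

def PatEquiv (n : ℕ) (P P' : Fin (2^n) → Bool) : Prop :=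
  ∃ L : List (ℕ × ℕ), (∀ p ∈ L, ElemValid n p.1 p.2) ∧
    P' = bitRevVec n (L.foldl (fun Q p => elemPermVec n p.1 p.2 Q) (bitRevVec n P))

def SymPat (n : ℕ) (P : Fin (2^n) → Bool) : Prop :=
  (∀ j, P j = false) ∨ IsRowUnion n P

lemma SP.pow_succ_eq (n : ℕ) : (2:ℕ)^(n+1) = 2^n * 2 := pow_succ 2 n

lemma SP.div_lt_two {n : ℕ} (i : Fin (2^(n+1))) : i.val / 2^n < 2 :=
  Nat.div_lt_iff_lt_mul (Nat.two_pow_pos n) |>.2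
    (by have := i.isLt; have h := SP.pow_succ_eq n; omega)

lemma SP.dbl_lt {n : ℕ} (d : Fin (2^n)) : 2*d.val < 2^(n+1) := by
  have := d.isLt; have h := SP.pow_succ_eq n; omega

lemma SP.dbl1_lt {n : ℕ} (d : Fin (2^n)) : 2*d.val+1 < 2^(n+1) := by
  have := d.isLt; have h := SP.pow_succ_eq n; omega

lemma SP.half_lt {n : ℕ} (j : Fin (2^(n+1))) : j.val/2 < 2^n := by
  have := j.isLt; have h := SP.pow_succ_eq n; omega

def SP.e0 {n : ℕ} (d : Fin (2^n)) : Fin (2^(n+1)) := ⟨2*d.val, SP.dbl_lt d⟩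

def SP.e1 {n : ℕ} (d : Fin (2^n)) : Fin (2^(n+1)) := ⟨2*d.val+1, SP.dbl1_lt d⟩

def SP.hf {n : ℕ} (j : Fin (2^(n+1))) : Fin (2^n) := ⟨j.val/2, SP.half_lt j⟩

lemma SP.G2_congr {a a' c c' : Fin 2} (h1 : a.val = a'.val) (h2 : c.val = c'.val) :
    G2 a c = G2 a' c' := by congr 1 <;> exact Fin.ext ‹_›

lemma SP.Gmat_congr {n : ℕ} {a a' c c' : Fin (2^n)} (h1 : a.val = a'.val) (h2 : c.val = c'.val) :
    Gmat n a c = Gmat n a' c' := by congr 1 <;> exact Fin.ext ‹_›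

lemma SP.gsucc (n : ℕ) (i j : Fin (2^(n+1))) :
    Gmat (n+1) i j =
      G2 ⟨i.val / 2^n, SP.div_lt_two i⟩ ⟨j.val / 2^n, SP.div_lt_two j⟩
      * Gmat n ⟨i.val % 2^n, Nat.mod_lt _ (Nat.two_pow_pos n)⟩
               ⟨j.val % 2^n, Nat.mod_lt _ (Nat.two_pow_pos n)⟩ := by
  show Matrix.reindex _ _ _ i j = _
  rw [Matrix.reindex_apply]
  simp only [Equiv.symm_trans_apply, finCongr_symm, finCongr_apply,
    finProdFinEquiv_symm_apply, Matrix.submatrix_apply, Matrix.kroneckerMap_apply]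
  congr 1

lemma SP.nat_e1 (n m : ℕ) : m % 2^(n+1) % 2 = m % 2 :=
  Nat.mod_mod_of_dvd m (dvd_pow_self 2 n.succ_ne_zero)

lemma SP.nat_e2 (n m : ℕ) : m % 2^(n+1) / 2 = m / 2 % 2^n := by
  rw [show (2:ℕ)^(n+1) = 2*2^n by ring]
  exact Nat.mod_mul_right_div_self m 2 (2^n)

lemma SP.nat_e3 (n m : ℕ) : m / 2^(n+1) = m / 2 / 2^n := by
  rw [show (2:ℕ)^(n+1) = 2*2^n by ring]
  exact (Nat.div_div_eq_div_mul m 2 (2^n)).symm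

lemma SP.gsucc' (n : ℕ) (i j : Fin (2^(n+1))) :
    Gmat (n+1) i j =
      G2 ⟨i.val % 2, Nat.mod_lt _ (by norm_num)⟩ ⟨j.val % 2, Nat.mod_lt _ (by norm_num)⟩
      * Gmat n (SP.hf i) (SP.hf j) := by
  induction n with
  | zero =>
    rw [SP.gsucc 0 i j]
    have h0 : (2:ℕ)^0 = 1 := rfl
    have h1 : (2:ℕ)^(0+1) = 2 := rfl
    have hi := i.isLt
    have hj := j.isLt
    congr 1
    · exact SP.G2_congr (by show i.val / 2^0 = i.val % 2; omega)
        (by show j.val / 2^0 = j.val % 2; omega)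
    · exact SP.Gmat_congr (by show i.val % 2^0 = i.val / 2; omega)
        (by show j.val % 2^0 = j.val / 2; omega)
  | succ n ih =>
    rw [SP.gsucc (n+1) i j]
    conv_lhs => rw [ih]
    conv_rhs => rw [SP.gsucc n]
    rw [mul_left_comm]
    congr 1
    · exact SP.G2_congr (SP.nat_e1 n i.val) (SP.nat_e1 n j.val)
    congr 1
    · exact SP.G2_congr (SP.nat_e3 n i.val) (SP.nat_e3 n j.val)
    · exact SP.Gmat_congr (SP.nat_e2 n i.val) (SP.nat_e2 n j.val)

lemma SP.gOne (n : ℕ) (i j : Fin (2^(n+1))) :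
    Gmat (n+1) i j = 1 ↔ ((j.val % 2 = 0 ∨ i.val % 2 = 1) ∧ Gmat n (SP.hf i) (SP.hf j) = 1) := by
  rw [SP.gsucc']
  have hz : ∀ x y : ZMod 2, x * y = 1 ↔ (x = 1 ∧ y = 1) := by decide
  rw [hz]
  have hg : ∀ a c : Fin 2, (G2 a c = 1 ↔ (c.val = 0 ∨ a.val = 1)) := by
    intro a c; fin_cases a <;> fin_cases c <;> simp [G2]
  rw [hg]

lemma SP.bitRev_low (n d : ℕ) (h : d < 2^n) : bitRev (n+1) d = 2 * bitRev n d := by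
  induction n generalizing d with
  | zero => have : d = 0 := by omega
            subst this; simp [bitRev]
  | succ n ih =>
    have hp := SP.pow_succ_eq n
    show 2^(n+1) * (d % 2) + bitRev (n+1) (d/2) = 2 * (2^n * (d%2) + bitRev n (d/2))
    rw [ih (d/2) (by omega)]
    ring

lemma SP.bitRev_high (n d : ℕ) (h : d < 2^n) : bitRev (n+1) (2^n + d) = 2 * bitRev n d + 1 := by
  induction n generalizing d with
  | zero => have : d = 0 := by omega
            subst this; simp [bitRev]
  | succ n ih =>
    have hp := SP.pow_succ_eq n
    show 2^(n+1) * ((2^(n+1)+d) % 2) + bitRev (n+1) ((2^(n+1)+d)/2)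
        = 2 * (2^n * (d%2) + bitRev n (d/2)) + 1
    have e1 : (2^(n+1)+d) % 2 = d % 2 := by omega
    have e2 : (2^(n+1)+d) / 2 = 2^n + d/2 := by omega
    rw [e1, e2, ih (d/2) (by omega)]
    ring

lemma SP.bitRev_bitRev (n i : ℕ) (h : i < 2^n) : bitRev n (bitRev n i) = i := by
  induction n generalizing i with
  | zero => simp [bitRev]; omega
  | succ n ih =>
    have hp := SP.pow_succ_eq n
    have h2 : i % 2 = 0 ∨ i % 2 = 1 := by omega
    obtain e | e := h2
    · have hi : i = 2*(i/2) := by omega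
      rw [hi]
      have hb : bitRev (n+1) (2*(i/2)) = bitRev n (i/2) := by
        have e1 : (2*(i/2)) % 2 = 0 := by omega
        have e2 : (2*(i/2)) / 2 = i/2 := by omega
        simp [bitRev, e1, e2]
      rw [hb, SP.bitRev_low n _ (bitRev_lt n _), ih (i/2) (by omega)]
    · have hi : i = 2*(i/2)+1 := by omega
      rw [hi]
      have hb : bitRev (n+1) (2*(i/2)+1) = 2^n + bitRev n (i/2) := by
        have e1 : (2*(i/2)+1) % 2 = 1 := by omega
        have e2 : (2*(i/2)+1) / 2 = i/2 := by omega
        simp [bitRev, e1, e2]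
      rw [hb, SP.bitRev_high n _ (bitRev_lt n _), ih (i/2) (by omega)]

def SP.evenPart (n : ℕ) (P : Fin (2^(n+1)) → Bool) : Fin (2^n) → Bool := fun d => P (SP.e0 d)

def SP.oddPart (n : ℕ) (P : Fin (2^(n+1)) → Bool) : Fin (2^n) → Bool := fun d => P (SP.e1 d)

lemma SP.hf_e0 {n : ℕ} (d : Fin (2^n)) : SP.hf (SP.e0 d) = d :=
  Fin.ext (by show 2*d.val/2 = d.val; omega)

lemma SP.hf_e1 {n : ℕ} (d : Fin (2^n)) : SP.hf (SP.e1 d) = d :=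
  Fin.ext (by show (2*d.val+1)/2 = d.val; omega)

lemma SP.e0_mod {n : ℕ} (b : Fin (2^n)) : (SP.e0 b).val % 2 = 0 := by
  show 2*b.val % 2 = 0; omega

lemma SP.e1_mod {n : ℕ} (b : Fin (2^n)) : (SP.e1 b).val % 2 = 1 := by
  show (2*b.val+1) % 2 = 1; omega

lemma SP.gOne_j0 {n : ℕ} (i : Fin (2^(n+1))) (d : Fin (2^n)) :
    Gmat (n+1) i (SP.e0 d) = 1 ↔ Gmat n (SP.hf i) d = 1 := by
  rw [SP.gOne, SP.hf_e0]
  simp [SP.e0_mod d]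

lemma SP.gOne_j1 {n : ℕ} (i : Fin (2^(n+1))) (d : Fin (2^n)) :
    Gmat (n+1) i (SP.e1 d) = 1 ↔ (i.val % 2 = 1 ∧ Gmat n (SP.hf i) d = 1) := by
  rw [SP.gOne, SP.hf_e1]
  simp [SP.e1_mod d]

lemma SP.j_split {n : ℕ} (j : Fin (2^(n+1))) : (∃ d, j = SP.e0 d) ∨ (∃ d, j = SP.e1 d) := by
  have h2 : j.val % 2 = 0 ∨ j.val % 2 = 1 := by omega
  obtain h | h := h2
  · exact Or.inl ⟨SP.hf j, Fin.ext (by show j.val = 2*(j.val/2); omega)⟩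
  · exact Or.inr ⟨SP.hf j, Fin.ext (by show j.val = 2*(j.val/2)+1; omega)⟩

lemma SP.core (n : ℕ) (P : Fin (2^(n+1)) → Bool) :
    SymPat (n+1) P ↔
      SymPat n (SP.evenPart n P) ∧ SymPat n (SP.oddPart n P) ∧
      ∀ d, SP.oddPart n P d = true → SP.evenPart n P d = true := by
  constructor
  · rintro (hz | ⟨L, hne, hL⟩)
    · exact ⟨Or.inl fun d => hz (SP.e0 d), Or.inl fun d => hz (SP.e1 d),
        fun d h => absurd h (by simp [SP.oddPart, hz])⟩
    · have hA : ∀ d, SP.evenPart n P d = true ↔ ∃ b ∈ L.image SP.hf, Gmat n b d = 1 := by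
        intro d
        rw [show SP.evenPart n P d = P (SP.e0 d) from rfl, hL (SP.e0 d)]
        constructor
        · rintro ⟨i, hi, hg⟩
          exact ⟨SP.hf i, Finset.mem_image_of_mem _ hi, (SP.gOne_j0 i d).mp hg⟩
        · rintro ⟨b, hb, hg⟩
          obtain ⟨i, hi, rfl⟩ := Finset.mem_image.mp hb
          exact ⟨i, hi, (SP.gOne_j0 i d).mpr hg⟩
      have hB : ∀ d, SP.oddPart n P d = true ↔
          ∃ b ∈ (L.filter fun i => i.val % 2 = 1).image SP.hf, Gmat n b d = 1 := by
        intro d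
        rw [show SP.oddPart n P d = P (SP.e1 d) from rfl, hL (SP.e1 d)]
        constructor
        · rintro ⟨i, hi, hg⟩
          obtain ⟨h1, h2⟩ := (SP.gOne_j1 i d).mp hg
          exact ⟨SP.hf i, Finset.mem_image_of_mem _ (Finset.mem_filter.mpr ⟨hi, h1⟩), h2⟩
        · rintro ⟨b, hb, hg⟩
          obtain ⟨i, hi, rfl⟩ := Finset.mem_image.mp hb
          obtain ⟨hiL, h1⟩ := Finset.mem_filter.mp hi
          exact ⟨i, hiL, (SP.gOne_j1 i d).mpr ⟨h1, hg⟩⟩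
      refine ⟨Or.inr ⟨L.image SP.hf, hne.image _, hA⟩, ?_, ?_⟩
      · rcases Finset.eq_empty_or_nonempty ((L.filter fun i => i.val % 2 = 1).image SP.hf)
          with he | hne'
        · refine Or.inl fun d => ?_
          cases hod : SP.oddPart n P d with
          | false => rfl
          | true =>
            obtain ⟨b, hb, -⟩ := (hB d).mp hod
            rw [he] at hb
            exact absurd hb (Finset.notMem_empty b)
        · exact Or.inr ⟨_, hne', hB⟩
      · intro d hd
        obtain ⟨b, hb, hg⟩ := (hB d).mp hd
        obtain ⟨i, hi, rfl⟩ := Finset.mem_image.mp hb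
        exact (hA d).mpr ⟨SP.hf i, Finset.mem_image_of_mem _ (Finset.mem_filter.mp hi).1, hg⟩
  · rintro ⟨hA, hB, hsub⟩
    rcases hA with hA0 | ⟨LA, hAne, hLA⟩
    · refine Or.inl fun j => ?_
      rcases SP.j_split j with ⟨d, rfl⟩ | ⟨d, rfl⟩
      · exact hA0 d
      · cases hod : SP.oddPart n P d with
        | false => exact hod
        | true => exact absurd (hsub d hod) (by simp [hA0 d])
    · obtain ⟨LB, hLB⟩ : ∃ LB : Finset (Fin (2^n)),
          ∀ d, SP.oddPart n P d = true ↔ ∃ b ∈ LB, Gmat n b d = 1 := by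
        rcases hB with hB0 | ⟨LB, -, hLB⟩
        · exact ⟨∅, fun d => by simp [hB0 d]⟩
        · exact ⟨LB, hLB⟩
      obtain ⟨a, ha⟩ := hAne
      refine Or.inr ⟨LA.image SP.e0 ∪ LB.image SP.e1,
        ⟨SP.e0 a, Finset.mem_union_left _ (Finset.mem_image_of_mem _ ha)⟩, fun j => ?_⟩
      rcases SP.j_split j with ⟨d, rfl⟩ | ⟨d, rfl⟩
      · rw [show P (SP.e0 d) = SP.evenPart n P d from rfl, hLA d]
        constructor
        · rintro ⟨b, hb, hg⟩
          refine ⟨SP.e0 b, Finset.mem_union_left _ (Finset.mem_image_of_mem _ hb), ?_⟩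
          rw [SP.gOne_j0, SP.hf_e0]; exact hg
        · rintro ⟨i, hi, hg⟩
          rcases Finset.mem_union.mp hi with hi' | hi'
          · obtain ⟨b, hb, rfl⟩ := Finset.mem_image.mp hi'
            rw [SP.gOne_j0, SP.hf_e0] at hg
            exact ⟨b, hb, hg⟩
          · obtain ⟨b, hb, rfl⟩ := Finset.mem_image.mp hi'
            rw [SP.gOne_j0, SP.hf_e1] at hg
            exact (hLA d).mp (hsub d ((hLB d).mpr ⟨b, hb, hg⟩))
      · rw [show P (SP.e1 d) = SP.oddPart n P d from rfl, hLB d]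
        constructor
        · rintro ⟨b, hb, hg⟩
          refine ⟨SP.e1 b, Finset.mem_union_right _ (Finset.mem_image_of_mem _ hb), ?_⟩
          rw [SP.gOne_j1, SP.hf_e1]; exact ⟨SP.e1_mod b, hg⟩
        · rintro ⟨i, hi, hg⟩
          rcases Finset.mem_union.mp hi with hi' | hi'
          · obtain ⟨b, hb, rfl⟩ := Finset.mem_image.mp hi'
            rw [SP.gOne_j1] at hg
            have h0 := SP.e0_mod b
            omega
          · obtain ⟨b, hb, rfl⟩ := Finset.mem_image.mp hi'
            rw [SP.gOne_j1, SP.hf_e1] at hg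
            exact ⟨b, hb, hg.2⟩

lemma SP.bitRevFin_invol {n : ℕ} (i : Fin (2^n)) : bitRevFin n (bitRevFin n i) = i :=
  Fin.ext (SP.bitRev_bitRev n i.val i.isLt)

lemma SP.reduceLow (n : ℕ) (P : Fin (2^(n+1)) → Bool) (d : Fin (2^n)) :
    lowHalf n (bitRevVec (n+1) P) d = SP.evenPart n P (bitRevFin n d) := by
  show P ⟨bitRev (n+1) d.val, bitRev_lt _ _⟩ = P ⟨2 * bitRev n d.val, SP.dbl_lt (bitRevFin n d)⟩
  exact congrArg P (Fin.ext (SP.bitRev_low n d.val d.isLt))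

lemma SP.reduceHigh (n : ℕ) (P : Fin (2^(n+1)) → Bool) (d : Fin (2^n)) :
    highHalf n (bitRevVec (n+1) P) d = SP.oddPart n P (bitRevFin n d) := by
  show P ⟨bitRev (n+1) (2^n + d.val), bitRev_lt _ _⟩
      = P ⟨2 * bitRev n d.val + 1, SP.dbl1_lt (bitRevFin n d)⟩
  exact congrArg P (Fin.ext (SP.bitRev_high n d.val d.isLt))

/-- with B_N(P) = (P̄_0, P̄_1), P is a union of rows of G_N (or zero)
iff B_{N/2}(P̄_0), B_{N/2}(P̄_1) are unions of rows of G_{N/2} (or zero) and P̄_1 ⊆ P̄_0. -/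
theorem stmt13 (n : ℕ) (P : Fin (2^(n+1)) → Bool) :
    SymPat (n+1) P ↔
      (SymPat n (bitRevVec n (lowHalf n (bitRevVec (n+1) P))) ∧
       SymPat n (bitRevVec n (highHalf n (bitRevVec (n+1) P))) ∧
       (∀ i, highHalf n (bitRevVec (n+1) P) i = true →
             lowHalf n (bitRevVec (n+1) P) i = true)) := by
  have hlow : bitRevVec n (lowHalf n (bitRevVec (n+1) P)) = SP.evenPart n P := funext fun i => by
    show lowHalf n (bitRevVec (n+1) P) (bitRevFin n i) = SP.evenPart n P i
    rw [SP.reduceLow, SP.bitRevFin_invol]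
  have hhigh : bitRevVec n (highHalf n (bitRevVec (n+1) P)) = SP.oddPart n P := funext fun i => by
    show highHalf n (bitRevVec (n+1) P) (bitRevFin n i) = SP.oddPart n P i
    rw [SP.reduceHigh, SP.bitRevFin_invol]
  rw [hlow, hhigh, SP.core n P]
  refine and_congr_right fun _ => and_congr_right fun _ => ?_
  constructor
  · intro h i hi
    rw [SP.reduceLow]
    exact h _ (by rwa [SP.reduceHigh] at hi)
  · intro h d hd
    have := h (bitRevFin n d)
    rw [SP.reduceLow, SP.reduceHigh, SP.bitRevFin_invol] at this
    exact this hd
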